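/- Let B₁ and B₂ be simple skew left braces and α : (B₂,∘) → Aut(B₁,+,∘) a non-trivial group homomorphism such that α is not injective and the group (B₁,∘) has trivial center. Suppose moreover that B₁ is not a trivial skew left brace. Then the semidirect product B₁ ⋊_α B₂ is strongly prime and is not simple. -/

import Mathlib

/-- A *skew left brace* is a set with two group structures `(B,+)` and `(B,∘)`
(the latter written multiplicatively) satisfying `a∘(b+c) = a∘b - a + a∘c`.
The two identity elements automatically coincide. -/
class SkewLeftBrace (B : Type*) extends AddGroup B, Group B where
  mul_add_eq : ∀ a b c : B, a * (b + c) = a * b - a + a * c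

namespace SkewLeftBrace

variable {B : Type*} [SkewLeftBrace B]

/-- The map `λ_a : b ↦ -a + a∘b`. -/
def lmap (a b : B) : B := -a + a * b

/-- The brace star operation `a*b := -a + a∘b - b`. -/
def bstar (a b : B) : B := -a + a * b - b

/-- `X*Y`: the additive subgroup generated by all `bstar x y`, `x ∈ X`, `y ∈ Y`,
regarded as a set. -/
def setStar (X Y : Set B) : Set B :=
  ↑(AddSubgroup.closure {z : B | ∃ x ∈ X, ∃ y ∈ Y, z = bstar x y})

/-- Pointwise sum of two subsets. -/
def setSum (X Y : Set B) : Set B := {w : B | ∃ x ∈ X, ∃ y ∈ Y, w = x + y}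

/-- `X^Z := {z + x - z : x ∈ X, z ∈ Z}`. -/
def setConj (X Z : Set B) : Set B := {w : B | ∃ x ∈ X, ∃ z ∈ Z, w = z + x + -z}

/-- An ideal of a skew left brace: a subgroup of `(B,+)` which is normal in both
`(B,+)` and `(B,∘)` and invariant under all the maps `λ_a`. -/
structure IsIdeal (I : Set B) : Prop where
  zero_mem : (0 : B) ∈ I
  add_mem : ∀ ⦃x y : B⦄, x ∈ I → y ∈ I → x + y ∈ I
  neg_mem : ∀ ⦃x : B⦄, x ∈ I → -x ∈ I
  add_conj_mem : ∀ (b : B) ⦃x : B⦄, x ∈ I → b + x + -b ∈ I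
  mul_mem : ∀ ⦃x y : B⦄, x ∈ I → y ∈ I → x * y ∈ I
  inv_mem : ∀ ⦃x : B⦄, x ∈ I → x⁻¹ ∈ I
  mul_conj_mem : ∀ (b : B) ⦃x : B⦄, x ∈ I → b * x * b⁻¹ ∈ I
  lmap_mem : ∀ (a : B) ⦃x : B⦄, x ∈ I → lmap a x ∈ I

/-- A minimal ideal: a nonzero ideal whose only sub-ideals are `{0}` and itself. -/
def IsMinimalIdeal (I : Set B) : Prop :=
  IsIdeal I ∧ I ≠ {0} ∧ ∀ J : Set B, IsIdeal J → J ⊆ I → J = {0} ∨ J = I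

theorem mul_zero' (a : B) : a * (0 : B) = a := by
  have h := SkewLeftBrace.mul_add_eq a (0 : B) (0 : B)
  rw [add_zero] at h
  have h2 : a * (0:B) - a = 0 := (right_eq_add.mp h)
  exact sub_eq_zero.mp h2

theorem zero_eq_one : (0 : B) = 1 := by
  have h := mul_zero' (1 : B)
  rw [one_mul] at h
  exact h

theorem IsIdeal.one_mem {I : Set B} (h : IsIdeal I) : (1 : B) ∈ I :=
  (zero_eq_one (B := B)) ▸ h.zero_mem

variable (B) in
/-- A skew left brace is *semiprime* if `I*I ≠ {0}` for every nonzero ideal `I`. -/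
def Semiprime : Prop := ∀ I : Set B, IsIdeal I → I ≠ {0} → setStar I I ≠ {0}

variable (B) in
/-- A skew left brace is *prime*... (and) *simple* if its only ideals are `{0}` and `B`,
and these are distinct. -/
def Simple : Prop :=
  ({0} : Set B) ≠ Set.univ ∧ ∀ I : Set B, IsIdeal I → I = {0} ∨ I = Set.univ

variable (B) in
/-- A skew left brace is *Artinian* if every descending chain of ideals stabilizes. -/
def Artinian : Prop :=
  ∀ f : ℕ → Set B, (∀ n, IsIdeal (f n)) → (∀ n, f (n + 1) ⊆ f n) →
    ∃ N, ∀ n, N ≤ n → f n = f N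

/-- The `*`-products of copies of a fixed set `I`. -/
inductive IsStarPowerOf (I : Set B) : Set B → Prop
  | base : IsStarPowerOf I I
  | star {X Y : Set B} : IsStarPowerOf I X → IsStarPowerOf I Y →
      IsStarPowerOf I (setStar X Y)

variable (B) in
/-- A skew left brace is *strongly semiprime* if for every nonzero ideal `I`, every
`*`-product of copies of `I` is nonzero. -/
def StronglySemiprime : Prop :=
  ∀ I : Set B, IsIdeal I → I ≠ {0} → ∀ X : Set B, IsStarPowerOf I X → X ≠ {0}

/-- The `*`-products of nonzero ideals. -/
inductive IsStarProdOfNonzeroIdeals : Set B → Prop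
  | ideal {I : Set B} : IsIdeal I → I ≠ {0} → IsStarProdOfNonzeroIdeals I
  | star {X Y : Set B} : IsStarProdOfNonzeroIdeals X → IsStarProdOfNonzeroIdeals Y →
      IsStarProdOfNonzeroIdeals (setStar X Y)

variable (B) in
/-- A skew left brace is *strongly prime* if every `*`-product of nonzero ideals is nonzero. -/
def StronglyPrime : Prop :=
  ∀ X : Set B, IsStarProdOfNonzeroIdeals X → X ≠ {0}

end SkewLeftBrace
namespace SkewLeftBrace

variable {B : Type*} [SkewLeftBrace B]

/-- An ideal, regarded as a skew left brace with the restricted operations. -/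
def IsIdeal.brace {I : Set B} (h : IsIdeal I) : SkewLeftBrace I :=
  letI : Zero I := ⟨⟨0, h.zero_mem⟩⟩
  letI : Add I := ⟨fun x y => ⟨x.1 + y.1, h.add_mem x.2 y.2⟩⟩
  letI : Neg I := ⟨fun x => ⟨-x.1, h.neg_mem x.2⟩⟩
  letI : One I := ⟨⟨1, h.one_mem⟩⟩
  letI : Mul I := ⟨fun x y => ⟨x.1 * y.1, h.mul_mem x.2 y.2⟩⟩
  letI : Inv I := ⟨fun x => ⟨x.1⁻¹, h.inv_mem x.2⟩⟩
  { add := (· + ·)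
    zero := 0
    neg := (- ·)
    nsmul := nsmulRec
    zsmul := zsmulRec
    add_assoc := fun a b c => Subtype.ext (add_assoc a.1 b.1 c.1)
    zero_add := fun a => Subtype.ext (zero_add a.1)
    add_zero := fun a => Subtype.ext (add_zero a.1)
    neg_add_cancel := fun a => Subtype.ext (neg_add_cancel a.1)
    mul := (· * ·)
    one := 1
    inv := (·⁻¹)
    npow := npowRec
    zpow := zpowRec
    mul_assoc := fun a b c => Subtype.ext (mul_assoc a.1 b.1 c.1)
    one_mul := fun a => Subtype.ext (one_mul a.1)
    mul_one := fun a => Subtype.ext (mul_one a.1)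
    inv_mul_cancel := fun a => Subtype.ext (inv_mul_cancel a.1)
    mul_add_eq := fun a b c =>
      Subtype.ext (by
        show a.1 * (b.1 + c.1) = a.1 * b.1 + -a.1 + a.1 * c.1
        rw [SkewLeftBrace.mul_add_eq, sub_eq_add_neg]) }

/-- The direct product of two skew left braces, with componentwise operations. -/
def prodBrace (B₁ B₂ : Type*) [SkewLeftBrace B₁] [SkewLeftBrace B₂] :
    SkewLeftBrace (B₁ × B₂) :=
  { (inferInstance : AddGroup (B₁ × B₂)), (inferInstance : Group (B₁ × B₂)) with
    mul_add_eq := fun a b c =>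
      Prod.ext (by simp [SkewLeftBrace.mul_add_eq]) (by simp [SkewLeftBrace.mul_add_eq]) }

/-- Two skew left braces are isomorphic if there is a bijection preserving `+` and `∘`. -/
def IsBraceIsomorphic (A C : Type*) [SkewLeftBrace A] [SkewLeftBrace C] : Prop :=
  ∃ f : A ≃ C, (∀ x y : A, f (x + y) = f x + f y) ∧ (∀ x y : A, f (x * y) = f x * f y)

/-- A group homomorphism from `(B₂,∘)` to the automorphism group `Aut(B₁,+,∘)` of the
skew left brace `B₁`, presented as an action `act : B₂ → B₁ → B₁` by skew left brace
automorphisms. -/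
structure BraceActionHom (B₂ B₁ : Type*) [SkewLeftBrace B₂] [SkewLeftBrace B₁] where
  act : B₂ → B₁ → B₁
  act_bijective : ∀ a : B₂, Function.Bijective (act a)
  act_add : ∀ (a : B₂) (x y : B₁), act a (x + y) = act a x + act a y
  act_mul : ∀ (a : B₂) (x y : B₁), act a (x * y) = act a x * act a y
  act_hom : ∀ (a b : B₂) (x : B₁), act (a * b) x = act a (act b x)
  act_one : ∀ x : B₁, act (1 : B₂) x = x

variable {B₁ B₂ : Type*} [SkewLeftBrace B₁] [SkewLeftBrace B₂]

theorem BraceActionHom.act_one' (α : BraceActionHom B₂ B₁) (a : B₂) :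
    α.act a (1 : B₁) = 1 := by
  have h := α.act_mul a 1 1
  rw [mul_one] at h
  exact mul_eq_left.mp h.symm

/-- The underlying type of the semidirect product of two skew left braces. -/
@[ext]
structure SDP (B₁ B₂ : Type*) where
  fst : B₁
  snd : B₂

/-- The semidirect product `B₁ ⋊_α B₂` of skew left braces: the additive group is the
direct product, while `(a₁,a₂) ∘ (b₁,b₂) = (a₁ ∘ α_{a₂}(b₁), a₂ ∘ b₂)`. -/
def BraceActionHom.sdp (α : BraceActionHom B₂ B₁) : SkewLeftBrace (SDP B₁ B₂) :=
  letI : Zero (SDP B₁ B₂) := ⟨⟨0, 0⟩⟩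
  letI : Add (SDP B₁ B₂) := ⟨fun p q => ⟨p.fst + q.fst, p.snd + q.snd⟩⟩
  letI : Neg (SDP B₁ B₂) := ⟨fun p => ⟨-p.fst, -p.snd⟩⟩
  letI : One (SDP B₁ B₂) := ⟨⟨1, 1⟩⟩
  letI : Mul (SDP B₁ B₂) := ⟨fun p q => ⟨p.fst * α.act p.snd q.fst, p.snd * q.snd⟩⟩
  letI : Inv (SDP B₁ B₂) := ⟨fun p => ⟨α.act p.snd⁻¹ p.fst⁻¹, p.snd⁻¹⟩⟩
  { add := (· + ·)
    zero := 0
    neg := (- ·)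
    nsmul := nsmulRec
    zsmul := zsmulRec
    add_assoc := fun a b c =>
      SDP.ext (add_assoc a.fst b.fst c.fst) (add_assoc a.snd b.snd c.snd)
    zero_add := fun a => SDP.ext (zero_add a.fst) (zero_add a.snd)
    add_zero := fun a => SDP.ext (add_zero a.fst) (add_zero a.snd)
    neg_add_cancel := fun a => SDP.ext (neg_add_cancel a.fst) (neg_add_cancel a.snd)
    mul := (· * ·)
    one := 1
    inv := (·⁻¹)
    npow := npowRec
    zpow := zpowRec
    mul_assoc := fun a b c =>
      SDP.ext
        (by show (a.fst * α.act a.snd b.fst) * α.act (a.snd * b.snd) c.fst =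
              a.fst * α.act a.snd (b.fst * α.act b.snd c.fst)
            rw [α.act_hom, α.act_mul, mul_assoc])
        (mul_assoc a.snd b.snd c.snd)
    one_mul := fun a =>
      SDP.ext (by show (1 : B₁) * α.act 1 a.fst = a.fst; rw [α.act_one, one_mul])
        (one_mul a.snd)
    mul_one := fun a =>
      SDP.ext (by show a.fst * α.act a.snd (1 : B₁) = a.fst; rw [α.act_one', mul_one])
        (mul_one a.snd)
    inv_mul_cancel := fun a =>
      SDP.ext
        (by show α.act a.snd⁻¹ a.fst⁻¹ * α.act a.snd⁻¹ a.fst = 1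
            rw [← α.act_mul, inv_mul_cancel, α.act_one'])
        (inv_mul_cancel a.snd)
    mul_add_eq := fun a b c =>
      SDP.ext
        (by show a.fst * α.act a.snd (b.fst + c.fst) =
              a.fst * α.act a.snd b.fst + -a.fst + a.fst * α.act a.snd c.fst
            rw [α.act_add, SkewLeftBrace.mul_add_eq, sub_eq_add_neg])
        (by show a.snd * (b.snd + c.snd) = a.snd * b.snd + -a.snd + a.snd * c.snd
            rw [SkewLeftBrace.mul_add_eq, sub_eq_add_neg]) }

end SkewLeftBrace

namespace SkewLeftBrace

variable {B : Type*} [SkewLeftBrace B]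

theorem aux_mul_eq_add_bstar (a b : B) : a * b = a + (bstar a b + b) := by
  simp [bstar, sub_eq_add_neg, ← add_assoc]

theorem aux_inv_eq (b : B) : b⁻¹ = -bstar b b⁻¹ + -b := by
  have h := aux_mul_eq_add_bstar b b⁻¹
  rw [mul_inv_cancel, ← zero_eq_one] at h
  have h2 : bstar b b⁻¹ + b⁻¹ = -b := by
    have h3 := congrArg (fun t => -b + t) h
    simpa [← add_assoc] using h3.symm
  calc b⁻¹ = -bstar b b⁻¹ + (bstar b b⁻¹ + b⁻¹) := by simp [← add_assoc]
    _ = -bstar b b⁻¹ + -b := by rw [h2]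

theorem aux_bstar_add (a b c : B) :
    b + bstar a c + -b = -bstar a b + bstar a (b + c) := by
  simp [bstar, sub_eq_add_neg, SkewLeftBrace.mul_add_eq, neg_add_rev, add_assoc]

theorem aux_lmap_eq (a x : B) : lmap a x = bstar a x + x := by
  simp [lmap, bstar, sub_eq_add_neg, add_assoc]

/-- The generating set of `setStar Set.univ Set.univ`. -/
theorem aux_starUniv_isIdeal : IsIdeal (setStar (Set.univ : Set B) Set.univ) := by
  set S : Set B := {z : B | ∃ x ∈ (Set.univ : Set B), ∃ y ∈ (Set.univ : Set B), z = bstar x y}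
    with hS
  have hgen : ∀ a b : B, bstar a b ∈ AddSubgroup.closure S := fun a b =>
    AddSubgroup.subset_closure ⟨a, trivial, b, trivial, rfl⟩
  have hmem : ∀ z : B, z ∈ setStar (Set.univ : Set B) Set.univ ↔
      z ∈ AddSubgroup.closure S := fun z => Iff.rfl
  have hconj : ∀ (b : B) ⦃x : B⦄, x ∈ AddSubgroup.closure S →
      b + x + -b ∈ AddSubgroup.closure S := by
    intro b x hx
    induction hx using AddSubgroup.closure_induction with
    | mem z hz =>
      obtain ⟨u, -, v, -, rfl⟩ := hz
      rw [aux_bstar_add]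
      exact AddSubgroup.add_mem _ (AddSubgroup.neg_mem _ (hgen u b)) (hgen u (b + v))
    | zero => simpa using AddSubgroup.zero_mem _
    | add z w _ _ hz hw =>
      have : b + (z + w) + -b = (b + z + -b) + (b + w + -b) := by
        simp [add_assoc]
      rw [this]; exact AddSubgroup.add_mem _ hz hw
    | neg z _ hz =>
      have : b + -z + -b = -(b + z + -b) := by simp [add_assoc]
      rw [this]; exact AddSubgroup.neg_mem _ hz
  refine ⟨AddSubgroup.zero_mem _, fun x y hx hy => AddSubgroup.add_mem _ hx hy,
    fun x hx => AddSubgroup.neg_mem _ hx, hconj, ?_, ?_, ?_, ?_⟩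
  · intro x y hx hy
    rw [hmem, aux_mul_eq_add_bstar]
    exact AddSubgroup.add_mem _ hx (AddSubgroup.add_mem _ (hgen x y) hy)
  · intro x hx
    rw [hmem, aux_inv_eq]
    exact AddSubgroup.add_mem _ (AddSubgroup.neg_mem _ (hgen x x⁻¹)) (AddSubgroup.neg_mem _ hx)
  · intro b x hx
    rw [hmem]
    set w₂ := bstar (b * x) b⁻¹ with hw₂
    set w₃ := bstar b b⁻¹ with hw₃
    have key : b * x * b⁻¹ = b + (bstar b x + x + (w₂ + -w₃)) + -b := by
      conv_lhs => rw [aux_mul_eq_add_bstar (b * x) b⁻¹]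
      rw [← hw₂, aux_mul_eq_add_bstar b x, aux_inv_eq b, ← hw₃]
      simp [add_assoc]
    rw [key]
    exact hconj b (AddSubgroup.add_mem _ (AddSubgroup.add_mem _ (hgen b x) hx)
      (AddSubgroup.add_mem _ (hgen (b * x) b⁻¹) (AddSubgroup.neg_mem _ (hgen b b⁻¹))))
  · intro a x hx
    rw [hmem, aux_lmap_eq]
    exact AddSubgroup.add_mem _ (hgen a x) hx

theorem aux_starUniv_eq_univ (hs : Simple B) (hnt : ∃ a b : B, a * b ≠ a + b) :
    setStar (Set.univ : Set B) Set.univ = Set.univ := by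
  rcases hs.2 _ aux_starUniv_isIdeal with h | h
  · exfalso
    obtain ⟨a, b, hab⟩ := hnt
    have hm : bstar a b ∈ setStar (Set.univ : Set B) Set.univ :=
      AddSubgroup.subset_closure ⟨a, trivial, b, trivial, rfl⟩
    rw [h] at hm
    have h2 : -a + a * b - b = 0 := hm
    have h3 : -a + a * b = b := sub_eq_zero.mp h2
    apply hab
    have h4 := congrArg (a + ·) h3
    simpa using h4
  · exact h

theorem aux_star_mono {X X' Y Y' : Set B} (hX : X ⊆ X') (hY : Y ⊆ Y') :
    setStar X Y ⊆ setStar X' Y' := by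
  apply AddSubgroup.closure_mono
  rintro z ⟨x, hx, y, hy, rfl⟩
  exact ⟨x, hX hx, y, hY hy, rfl⟩

end SkewLeftBrace

open SkewLeftBrace

/-- If `B₁`, `B₂` are simple, `α` is non-trivial and non-injective, `(B₁,∘)` has
trivial center, and `B₁` is not a trivial skew left brace, then `B₁ ⋊_α B₂` is strongly
prime and not simple. -/
theorem sdp_stronglyPrime_of_noninjective {B₁ B₂ : Type*} [SkewLeftBrace B₁] [SkewLeftBrace B₂]
    (h₁ : SkewLeftBrace.Simple B₁) (h₂ : SkewLeftBrace.Simple B₂)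
    (α : BraceActionHom B₂ B₁)
    (hα : ∃ (a : B₂) (x : B₁), α.act a x ≠ x)
    (hninj : ¬ ∀ a b : B₂, (∀ x : B₁, α.act a x = α.act b x) → a = b)
    (hcenter : ∀ g : B₁, (∀ h : B₁, g * h = h * g) → g = 1)
    (hnontriv : ∃ a b : B₁, a * b ≠ a + b) :
    @SkewLeftBrace.StronglyPrime _ α.sdp ∧ ¬ @SkewLeftBrace.Simple _ α.sdp := by
  letI : SkewLeftBrace (SDP B₁ B₂) := α.sdp
  -- Basic computation rules for the semidirect product operations
  have E_add : ∀ (x x' : B₁) (a b : B₂),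
      (⟨x, a⟩ : SDP B₁ B₂) + ⟨x', b⟩ = ⟨x + x', a + b⟩ := fun _ _ _ _ => rfl
  have E_neg : ∀ (x : B₁) (a : B₂), -(⟨x, a⟩ : SDP B₁ B₂) = ⟨-x, -a⟩ := fun _ _ => rfl
  have E_mul : ∀ (x x' : B₁) (a b : B₂),
      (⟨x, a⟩ : SDP B₁ B₂) * ⟨x', b⟩ = ⟨x * α.act a x', a * b⟩ := fun _ _ _ _ => rfl
  have E_inv : ∀ (x : B₁) (a : B₂),
      (⟨x, a⟩ : SDP B₁ B₂)⁻¹ = ⟨α.act a⁻¹ x⁻¹, a⁻¹⟩ := fun _ _ => rfl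
  have hzero : (0 : SDP B₁ B₂) = ⟨0, 0⟩ := rfl
  -- action facts
  have act_zero : ∀ x : B₁, α.act (0 : B₂) x = x := by
    intro x; rw [zero_eq_one]; exact α.act_one x
  have act_zero' : ∀ a : B₂, α.act a (0 : B₁) = 0 := by
    intro a; rw [zero_eq_one]; exact α.act_one' a
  have act_inv : ∀ (a : B₂) (x : B₁), α.act a (α.act a⁻¹ x) = x := fun a x => by
    rw [← α.act_hom, mul_inv_cancel, α.act_one]
  have h0inv₂ : ((0 : B₂))⁻¹ = 0 := by rw [zero_eq_one, inv_one]
  have h0inv₁ : ((0 : B₁))⁻¹ = 0 := by rw [zero_eq_one, inv_one]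
  have h0mul₂ : ((0 : B₂)) * 0 = 0 := by rw [zero_eq_one, one_mul]
  have h0mul₁ : ((0 : B₁)) * 0 = 0 := by rw [zero_eq_one, one_mul]
  -- nonzero elements in B₁ and B₂
  obtain ⟨x₀, hx₀⟩ : ∃ x : B₁, x ≠ 0 := by
    by_contra h
    push_neg at h
    exact h₁.1 (Set.eq_univ_iff_forall.mpr fun x => (h x : x = 0))
  obtain ⟨y₀, hy₀⟩ : ∃ y : B₂, y ≠ 0 := by
    by_contra h
    push_neg at h
    exact h₂.1 (Set.eq_univ_iff_forall.mpr fun y => (h y : y = 0))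
  -- The ideal I₁ = B₁ × {0}
  set I₁ : Set (SDP B₁ B₂) := {p | p.snd = 0} with hI₁def
  have idealI₁ : IsIdeal I₁ := by
    refine ⟨rfl, ?_, ?_, ?_, ?_, ?_, ?_, ?_⟩
    · intro x y hx hy
      show x.snd + y.snd = 0
      rw [(hx : x.snd = 0), (hy : y.snd = 0), add_zero]
    · intro x hx
      show -x.snd = 0
      rw [(hx : x.snd = 0), neg_zero]
    · intro b x hx
      show b.snd + x.snd + -b.snd = 0
      rw [(hx : x.snd = 0), add_zero, add_neg_cancel]
    · intro x y hx hy
      show x.snd * y.snd = 0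
      rw [(hx : x.snd = 0), (hy : y.snd = 0), h0mul₂]
    · intro x hx
      show x.snd⁻¹ = 0
      rw [(hx : x.snd = 0), h0inv₂]
    · intro b x hx
      show b.snd * x.snd * b.snd⁻¹ = 0
      rw [(hx : x.snd = 0), zero_eq_one, mul_one, mul_inv_cancel]
    · intro a x hx
      show -a.snd + a.snd * x.snd = 0
      rw [(hx : x.snd = 0), zero_eq_one, mul_one, neg_add_cancel]
      exact zero_eq_one
  have hI₁ne : I₁ ≠ {0} := by
    intro h
    have : (⟨x₀, 0⟩ : SDP B₁ B₂) ∈ I₁ := rfl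
    rw [h] at this
    exact hx₀ (congrArg SDP.fst this)
  have hI₁nuniv : I₁ ≠ Set.univ := by
    intro h
    have : (⟨0, y₀⟩ : SDP B₁ B₂) ∈ I₁ := h ▸ trivial
    exact hy₀ this
  -- Main step: every nonzero ideal of the semidirect product contains I₁
  have main : ∀ J : Set (SDP B₁ B₂), IsIdeal J → J ≠ {0} → I₁ ⊆ J := by
    intro J hJ hJne
    set K : Set B₁ := {x | (⟨x, 0⟩ : SDP B₁ B₂) ∈ J} with hKdef
    by_cases hK : K = {0}
    · -- derive a contradiction
      exfalso
      have hKz : ∀ x : B₁, (⟨x, 0⟩ : SDP B₁ B₂) ∈ J → x = 0 := by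
        intro x hx
        have : x ∈ K := hx
        rw [hK] at this
        exact this
      -- Fact 1: if (x,a) ∈ J then α_a is conjugation by x⁻¹
      have Fact1 : ∀ (x : B₁) (a : B₂), (⟨x, a⟩ : SDP B₁ B₂) ∈ J →
          ∀ y : B₁, α.act a y = x⁻¹ * y * x := by
        intro x a hp
        have claim : ∀ y : B₁, y * x * α.act a y⁻¹ * x⁻¹ = 0 := by
          intro y
          have m1 := hJ.mul_conj_mem (⟨y, 0⟩ : SDP B₁ B₂) hp
          have e1 : (⟨y, 0⟩ : SDP B₁ B₂) * ⟨x, a⟩ = ⟨y * x, a⟩ :=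
            SDP.ext (by show y * α.act (0 : B₂) x = y * x; rw [act_zero]) (by
              show (0 : B₂) * a = a; rw [zero_eq_one, one_mul])
          have e2 : (⟨y, 0⟩ : SDP B₁ B₂)⁻¹ = ⟨y⁻¹, 0⟩ :=
            SDP.ext (by show α.act (0 : B₂)⁻¹ y⁻¹ = y⁻¹; rw [h0inv₂, act_zero]) h0inv₂
          have e3 : (⟨y * x, a⟩ : SDP B₁ B₂) * ⟨y⁻¹, 0⟩ = ⟨y * x * α.act a y⁻¹, a⟩ :=
            SDP.ext rfl (by show a * (0 : B₂) = a; rw [zero_eq_one, mul_one])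
          rw [e1, e2, e3] at m1
          have m2 := hJ.mul_mem m1 (hJ.inv_mem hp)
          have e4 : (⟨x, a⟩ : SDP B₁ B₂)⁻¹ = ⟨α.act a⁻¹ x⁻¹, a⁻¹⟩ := rfl
          have e5 : (⟨y * x * α.act a y⁻¹, a⟩ : SDP B₁ B₂) * ⟨α.act a⁻¹ x⁻¹, a⁻¹⟩ =
              ⟨y * x * α.act a y⁻¹ * x⁻¹, 0⟩ :=
            SDP.ext (by show y * x * α.act a y⁻¹ * α.act a (α.act a⁻¹ x⁻¹) = _
                        rw [act_inv]) (by
              show a * a⁻¹ = 0; rw [zero_eq_one, mul_inv_cancel])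
          rw [e4, e5] at m2
          exact hKz _ m2
        intro y
        have h := claim y⁻¹
        rw [inv_inv, zero_eq_one] at h
        have h2 : y⁻¹ * x * α.act a y = x := by
          have := congrArg (· * x) h
          simpa [mul_assoc] using this
        have h3 := congrArg (fun t => x⁻¹ * y * t) h2
        simpa [mul_assoc] using h3
      -- uniqueness of the first coordinate
      have Uniq : ∀ (x x' : B₁) (a : B₂), (⟨x, a⟩ : SDP B₁ B₂) ∈ J →
          (⟨x', a⟩ : SDP B₁ B₂) ∈ J → x = x' := by
        intro x x' a hx hx'
        have hg : ∀ yy : B₁, (x * x'⁻¹) * yy = yy * (x * x'⁻¹) := by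
          intro yy
          have e := (Fact1 x' a hx' yy).symm.trans (Fact1 x a hx yy)
          have e2 := congrArg (fun t => x * t * x⁻¹ * (x * x'⁻¹)) e
          simpa [mul_assoc] using e2
        have := hcenter _ (hg)
        exact (mul_inv_eq_one.mp this)
      -- the projection of J to B₂ is an ideal
      set L : Set B₂ := {a | ∃ x : B₁, (⟨x, a⟩ : SDP B₁ B₂) ∈ J} with hLdef
      have idealL : IsIdeal L := by
        refine ⟨⟨0, hzero ▸ hJ.zero_mem⟩, ?_, ?_, ?_, ?_, ?_, ?_, ?_⟩
        · rintro a b ⟨x, hx⟩ ⟨x', hx'⟩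
          have := hJ.add_mem hx hx'
          rw [E_add] at this
          exact ⟨_, this⟩
        · rintro a ⟨x, hx⟩
          have := hJ.neg_mem hx
          rw [E_neg] at this
          exact ⟨_, this⟩
        · rintro b a ⟨x, hx⟩
          have := hJ.add_conj_mem (⟨0, b⟩ : SDP B₁ B₂) hx
          rw [E_add, E_neg, E_add] at this
          exact ⟨_, this⟩
        · rintro a b ⟨x, hx⟩ ⟨x', hx'⟩
          have := hJ.mul_mem hx hx'
          rw [E_mul] at this
          exact ⟨_, this⟩
        · rintro a ⟨x, hx⟩
          have := hJ.inv_mem hx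
          rw [E_inv] at this
          exact ⟨_, this⟩
        · rintro b a ⟨x, hx⟩
          have := hJ.mul_conj_mem (⟨0, b⟩ : SDP B₁ B₂) hx
          rw [E_mul, E_inv, E_mul] at this
          exact ⟨_, this⟩
        · rintro b a ⟨x, hx⟩
          have := hJ.lmap_mem (⟨0, b⟩ : SDP B₁ B₂) hx
          have e : lmap (⟨0, b⟩ : SDP B₁ B₂) ⟨x, a⟩ = ⟨-0 + 0 * α.act b x, lmap b a⟩ := by
            show -(⟨0, b⟩ : SDP B₁ B₂) + (⟨0, b⟩ : SDP B₁ B₂) * ⟨x, a⟩ = _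
            rw [E_neg, E_mul, E_add]
            rfl
          rw [e] at this
          exact ⟨_, this⟩
      have hLne : L ≠ {0} := by
        intro h
        apply hJne
        apply Set.Subset.antisymm
        · intro p hp
          have ha : p.snd ∈ L := ⟨p.fst, hp⟩
          rw [h] at ha
          have hx : p.fst ∈ K := by
            show (⟨p.fst, 0⟩ : SDP B₁ B₂) ∈ J
            rw [← (ha : p.snd = 0)]
            exact hp
          rw [hK] at hx
          show p = 0
          exact SDP.ext (hx : p.fst = 0) (ha : p.snd = 0)
        · intro p hp
          rw [(hp : p = 0)]
          exact hJ.zero_mem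
      have hLuniv : L = Set.univ := (h₂.2 L idealL).resolve_left hLne
      -- kernel elements give (0,a) ∈ J
      have hker : ∀ a : B₂, (∀ y : B₁, α.act a y = y) → (⟨(0 : B₁), a⟩ : SDP B₁ B₂) ∈ J := by
        intro a ha
        obtain ⟨x, hx⟩ : a ∈ L := hLuniv ▸ trivial
        have hcomm : ∀ yy : B₁, x * yy = yy * x := by
          intro yy
          have h := Fact1 x a hx yy
          rw [ha yy] at h
          have h2 := congrArg (x * ·) h
          simpa [mul_assoc] using h2
        have hx1 : x = 1 := hcenter x hcomm
        rw [hx1, ← zero_eq_one] at hx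
        exact hx
      -- K₂ = {a | (0,a) ∈ J} is an ideal of B₂
      set K₂ : Set B₂ := {a | (⟨(0 : B₁), a⟩ : SDP B₁ B₂) ∈ J} with hK₂def
      have idealK₂ : IsIdeal K₂ := by
        refine ⟨by rw [Set.mem_setOf_eq, ← hzero]; exact hJ.zero_mem, ?_, ?_, ?_, ?_, ?_, ?_, ?_⟩
        · intro a b ha hb
          have := hJ.add_mem ha hb
          rw [E_add, show (0 : B₁) + 0 = 0 from add_zero 0] at this
          exact this
        · intro a ha
          have := hJ.neg_mem ha
          rw [E_neg, neg_zero] at this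
          exact this
        · intro b a ha
          have := hJ.add_conj_mem (⟨0, b⟩ : SDP B₁ B₂) ha
          rw [E_add, E_neg, E_add, show (0 : B₁) + 0 + -0 = 0 by simp] at this
          exact this
        · intro a b ha hb
          have := hJ.mul_mem ha hb
          rw [E_mul, show (0 : B₁) * α.act a 0 = 0 by rw [act_zero', h0mul₁]] at this
          exact this
        · intro a ha
          have := hJ.inv_mem ha
          rw [E_inv, show α.act a⁻¹ ((0 : B₁))⁻¹ = 0 by rw [h0inv₁, act_zero']] at this
          exact this
        · intro b a ha
          have := hJ.mul_conj_mem (⟨0, b⟩ : SDP B₁ B₂) ha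
          rw [E_mul, E_inv, E_mul] at this
          simp only [act_zero', h0inv₁, h0mul₁] at this
          exact this
        · intro b a ha
          have := hJ.lmap_mem (⟨0, b⟩ : SDP B₁ B₂) ha
          have e : lmap (⟨0, b⟩ : SDP B₁ B₂) ⟨0, a⟩ = ⟨0, lmap b a⟩ := by
            show -(⟨0, b⟩ : SDP B₁ B₂) + (⟨0, b⟩ : SDP B₁ B₂) * ⟨0, a⟩ = _
            rw [E_neg, E_mul, E_add, act_zero', h0mul₁, neg_zero, add_zero]
            rfl
          rw [e] at this
          exact this
      -- K₂ is nonzero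
      push_neg at hninj
      obtain ⟨a, b, hab, hne⟩ := hninj
      have hc1 : ∀ y : B₁, α.act (a * b⁻¹) y = y := by
        intro y
        rw [α.act_hom, hab (α.act b⁻¹ y), act_inv]
      have hcne : a * b⁻¹ ≠ 0 := by
        intro h
        rw [zero_eq_one] at h
        exact hne (mul_inv_eq_one.mp h)
      have hK₂ne : K₂ ≠ {0} := by
        intro h
        have : a * b⁻¹ ∈ K₂ := hker _ hc1
        rw [h] at this
        exact hcne this
      -- K₂ is proper
      obtain ⟨a₀, z₀, ha₀⟩ := hα
      have hK₂nuniv : K₂ ≠ Set.univ := by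
        intro h
        have hm : a₀ ∈ K₂ := h ▸ trivial
        have := Fact1 0 a₀ hm z₀
        rw [zero_eq_one, inv_one, one_mul, mul_one] at this
        exact ha₀ this
      rcases h₂.2 K₂ idealK₂ with h | h
      · exact hK₂ne h
      · exact hK₂nuniv h
    · -- K is a nonzero ideal of B₁, hence равен B₁
      have idealK : IsIdeal K := by
        refine ⟨by rw [Set.mem_setOf_eq, ← hzero]; exact hJ.zero_mem, ?_, ?_, ?_, ?_, ?_, ?_, ?_⟩
        · intro x y hx hy
          have := hJ.add_mem hx hy
          rw [E_add, show (0 : B₂) + 0 = 0 from add_zero 0] at this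
          exact this
        · intro x hx
          have := hJ.neg_mem hx
          rw [E_neg, neg_zero] at this
          exact this
        · intro b x hx
          have := hJ.add_conj_mem (⟨b, 0⟩ : SDP B₁ B₂) hx
          rw [E_add, E_neg, E_add, show (0 : B₂) + 0 + -0 = 0 by simp] at this
          exact this
        · intro x y hx hy
          have := hJ.mul_mem hx hy
          rw [E_mul, act_zero, h0mul₂] at this
          exact this
        · intro x hx
          have := hJ.inv_mem hx
          rw [E_inv, h0inv₂, act_zero] at this
          exact this
        · intro b x hx
          have := hJ.mul_conj_mem (⟨b, 0⟩ : SDP B₁ B₂) hx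
          rw [E_mul, E_inv, E_mul] at this
          simp only [act_zero, h0inv₂, h0mul₂] at this
          exact this
        · intro a x hx
          have := hJ.lmap_mem (⟨a, 0⟩ : SDP B₁ B₂) hx
          have e : lmap (⟨a, 0⟩ : SDP B₁ B₂) ⟨x, 0⟩ = ⟨lmap a x, 0⟩ := by
            show -(⟨a, 0⟩ : SDP B₁ B₂) + (⟨a, 0⟩ : SDP B₁ B₂) * ⟨x, 0⟩ = _
            rw [E_neg, E_mul, E_add, act_zero, h0mul₂, neg_zero, add_zero]
            rfl
          rw [e] at this
          exact this
      have hKuniv : K = Set.univ := (h₁.2 K idealK).resolve_left hK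
      intro p hp
      have : p = ⟨p.fst, 0⟩ := SDP.ext rfl (hp : p.snd = 0)
      rw [this]
      have hk : p.fst ∈ K := by rw [hKuniv]; trivial
      exact hk
  -- I₁ ⊆ I₁ * I₁
  have Istar : I₁ ⊆ setStar I₁ I₁ := by
    intro p hp
    have hp2 : p.snd = 0 := hp
    have huniv := aux_starUniv_eq_univ h₁ hnontriv
    have hxcl : p.fst ∈ AddSubgroup.closure
        {z : B₁ | ∃ x ∈ (Set.univ : Set B₁), ∃ y ∈ (Set.univ : Set B₁), z = bstar x y} := by
      have : p.fst ∈ setStar (Set.univ : Set B₁) Set.univ := by rw [huniv]; trivial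
      exact this
    have E_bstar : ∀ u v : B₁,
        bstar (⟨u, 0⟩ : SDP B₁ B₂) ⟨v, 0⟩ = ⟨bstar u v, 0⟩ := by
      intro u v
      apply SDP.ext
      · show -u + u * α.act (0 : B₂) v + -v = bstar u v
        rw [act_zero]
        simp [bstar, sub_eq_add_neg]
      · show -(0 : B₂) + (0 : B₂) * 0 + -0 = 0
        rw [h0mul₂]
        simp
    have key : ∀ x : B₁, x ∈ AddSubgroup.closure
        {z : B₁ | ∃ x ∈ (Set.univ : Set B₁), ∃ y ∈ (Set.univ : Set B₁), z = bstar x y} →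
        (⟨x, 0⟩ : SDP B₁ B₂) ∈ AddSubgroup.closure
          {z : SDP B₁ B₂ | ∃ u ∈ I₁, ∃ v ∈ I₁, z = bstar u v} := by
      intro x hx
      induction hx using AddSubgroup.closure_induction with
      | mem z hz =>
        obtain ⟨u, -, v, -, rfl⟩ := hz
        rw [← E_bstar]
        exact AddSubgroup.subset_closure ⟨⟨u, 0⟩, rfl, ⟨v, 0⟩, rfl, rfl⟩
      | zero => exact hzero ▸ AddSubgroup.zero_mem _
      | add z w _ _ hz hw =>
        rw [show (⟨z + w, (0 : B₂)⟩ : SDP B₁ B₂) = ⟨z, 0⟩ + ⟨w, 0⟩ by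
          rw [E_add, add_zero]]
        exact AddSubgroup.add_mem _ hz hw
      | neg z _ hz =>
        rw [show (⟨-z, (0 : B₂)⟩ : SDP B₁ B₂) = -⟨z, 0⟩ by rw [E_neg, neg_zero]]
        exact AddSubgroup.neg_mem _ hz
    have : p = ⟨p.fst, 0⟩ := SDP.ext rfl hp2
    rw [this]
    exact key p.fst hxcl
  constructor
  · -- strongly prime
    intro X hX
    have hsub : I₁ ⊆ X := by
      induction hX with
      | ideal hI hIne => exact main _ hI hIne
      | star hXp hYp ihX ihY =>
        exact fun p hp => aux_star_mono ihX ihY (Istar hp)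
    intro hX0
    have hm : (⟨x₀, 0⟩ : SDP B₁ B₂) ∈ X := hsub rfl
    rw [hX0] at hm
    exact hx₀ (congrArg SDP.fst hm)
  · rintro ⟨-, hall⟩
    rcases hall I₁ idealI₁ with h | h
    · exact hI₁ne h
    · exact hI₁nuniv h
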